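/- Transfer lemma for the upper coefficient inequality: suppose 2 ≤ q < ∞ and β ≥ 1 are such that ‖g‖_{H^q} ≤ (Σ |aₙ|² c_β(n))^{1/2} holds for all g(z) = Σ aₙ zⁿ with finite right-hand side. Then for every positive integer k, ‖f‖_{H^{kq}} ≤ (Σ |aₙ|² c_{kβ}(n))^{1/2} for all f with finite right-hand side. -/

import Mathlib

noncomputable section

open Real

/-- The `n`-th Taylor coefficient of `(1-z)^{-β}`. -/
def binCoeff (β : ℝ) (n : ℕ) : ℝ := Real.Gamma (n + β) / (Real.Gamma β * n.factorial)

/-- The `p`-th power mean of `f` on the circle of radius `r`. -/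
def hardyMean (p : ℝ) (f : ℂ → ℂ) (r : ℝ) : ℝ :=
  ((2 * π)⁻¹ *
      ∫ θ in (0 : ℝ)..(2 * π),
        ‖f ((r : ℂ) * Complex.exp ((θ : ℂ) * Complex.I))‖ ^ p) ^ (1 / p)

lemma binCoeff_zero {β : ℝ} (hβ : 0 < β) : binCoeff β 0 = 1 := by
  have := Real.Gamma_pos_of_pos hβ
  simp [binCoeff]
  exact this.ne'

lemma binCoeff_succ {β : ℝ} (hβ : 0 < β) (n : ℕ) :
    binCoeff β (n + 1) = binCoeff β n * ((n + β) / (n + 1)) := by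
  have h1 : ((n : ℝ) + 1 + β) = ((n : ℝ) + β) + 1 := by ring
  have h2 : ((n : ℝ) + β) ≠ 0 := by positivity
  have hΓ : Real.Gamma ((n : ℝ) + 1 + β) = ((n : ℝ) + β) * Real.Gamma ((n : ℝ) + β) := by
    rw [h1, Real.Gamma_add_one h2]
  have hfac : ((n + 1).factorial : ℝ) = (n + 1) * n.factorial := by
    push_cast [Nat.factorial_succ]; ring
  have hΓβ : Real.Gamma β ≠ 0 := (Real.Gamma_pos_of_pos hβ).ne'
  have hnf : (n.factorial : ℝ) ≠ 0 := Nat.cast_ne_zero.2 n.factorial_ne_zero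
  rw [binCoeff, binCoeff]
  push_cast
  rw [hΓ, hfac]
  field_simp

lemma binCoeff_prod {β : ℝ} (hβ : 0 < β) (n : ℕ) :
    binCoeff β n = ∏ m ∈ Finset.range n, ((m + β) / (m + 1)) := by
  induction n with
  | zero => simp [binCoeff_zero hβ]
  | succ n ih => rw [binCoeff_succ hβ, Finset.prod_range_succ, ih]

lemma binCoeff_pos {β : ℝ} (hβ : 0 < β) (n : ℕ) : 0 < binCoeff β n := by
  rw [binCoeff_prod hβ]
  exact Finset.prod_pos fun m _ => by positivity

lemma binCoeff_one (n : ℕ) : binCoeff 1 n = 1 := by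
  rw [binCoeff_prod one_pos]
  refine Finset.prod_eq_one fun m _ => div_self (by positivity)

lemma one_le_binCoeff {β : ℝ} (hβ : 1 ≤ β) (n : ℕ) : 1 ≤ binCoeff β n := by
  rw [binCoeff_prod (lt_of_lt_of_le one_pos hβ)]
  calc (1:ℝ) = ∏ m ∈ Finset.range n, 1 := by simp
  _ ≤ _ := Finset.prod_le_prod (fun m _ => zero_le_one) (fun m _ => by
      rw [le_div_iff₀ (by positivity)]; linarith)

/-- key monotone-ratio lemma: for `1 ≤ δ ≤ γ`,
`c_γ(i+j) c_δ(i) c_δ(j) ≤ c_δ(i+j) c_γ(i) c_γ(j)`. -/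
lemma binCoeff_cross {δ γ : ℝ} (hδ : 0 < δ) (hγ : δ ≤ γ) (i j : ℕ) :
    binCoeff γ (i + j) * (binCoeff δ i * binCoeff δ j) ≤
      binCoeff δ (i + j) * (binCoeff γ i * binCoeff γ j) := by
  have hγ0 : 0 < γ := lt_of_lt_of_le hδ hγ
  -- ratio products
  have key : ∀ N : ℕ, binCoeff γ N = binCoeff δ N * ∏ m ∈ Finset.range N, ((m + γ) / (m + δ)) := by
    intro N
    rw [binCoeff_prod hδ, binCoeff_prod hγ0, ← Finset.prod_mul_distrib]
    refine Finset.prod_congr rfl fun m _ => ?_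
    have h1 : ((m : ℝ) + 1) ≠ 0 := by positivity
    have h2 : ((m : ℝ) + δ) ≠ 0 := by positivity
    field_simp
  have hR : ∀ N, (0:ℝ) < ∏ m ∈ Finset.range N, ((m + γ) / (m + δ)) := fun N =>
    Finset.prod_pos fun m _ => by positivity
  rw [key (i+j), key i, key j]
  have hsub : (∏ m ∈ Finset.range (i + j), ((m + γ) / (m + δ))) ≤
      (∏ m ∈ Finset.range i, ((m + γ) / (m + δ))) * ∏ m ∈ Finset.range j, ((m + γ) / (m + δ)) := by
    rw [Finset.prod_range_add]
    refine mul_le_mul_of_nonneg_left (Finset.prod_le_prod (fun m _ => by positivity)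
      (fun m _ => ?_)) (le_of_lt (hR i))
    rw [div_le_div_iff₀ (by positivity) (by positivity)]
    push_cast
    nlinarith [Nat.cast_nonneg (α := ℝ) i, Nat.cast_nonneg (α := ℝ) m]
  calc binCoeff δ (i+j) * (∏ m ∈ Finset.range (i + j), ((m + γ) / (m + δ))) *
        ((binCoeff δ i) * (binCoeff δ j))
      ≤ binCoeff δ (i+j) * ((∏ m ∈ Finset.range i, ((m + γ) / (m + δ))) *
          ∏ m ∈ Finset.range j, ((m + γ) / (m + δ))) * ((binCoeff δ i) * (binCoeff δ j)) := by
        have h1 := binCoeff_pos hδ (i+j)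
        have h2 := mul_pos (binCoeff_pos hδ i) (binCoeff_pos hδ j)
        gcongr
    _ = binCoeff δ (i+j) * (binCoeff δ i * (∏ m ∈ Finset.range i, ((m + γ) / (m + δ))) *
          (binCoeff δ j * ∏ m ∈ Finset.range j, ((m + γ) / (m + δ)))) := by ring
section
variable {β : ℝ}
lemma binCoeff_vandermonde {α β : ℝ} (hα : 0 < α) (hβ : 0 < β) (n : ℕ) :
    ∑ i ∈ Finset.range (n + 1), binCoeff α i * binCoeff β (n - i) = binCoeff (α + β) n := by
  induction n with
  | zero => simp [binCoeff_zero hα, binCoeff_zero hβ, binCoeff_zero (by positivity : (0:ℝ) < α + β)]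
  | succ n ih =>
    have hab : (0:ℝ) < α + β := by positivity
    have hrec : ∀ {γ : ℝ}, 0 < γ → ∀ m : ℕ,
        ((m : ℝ) + 1) * binCoeff γ (m + 1) = ((m : ℝ) + γ) * binCoeff γ m := by
      intro γ hγ m
      rw [binCoeff_succ hγ]
      field_simp
    -- show (n+1) * LHS(n+1) = (n + α + β) * LHS(n)
    have key : ((n : ℝ) + 1) * ∑ i ∈ Finset.range (n + 2), binCoeff α i * binCoeff β (n + 1 - i)
        = ((n : ℝ) + α + β) * ∑ i ∈ Finset.range (n + 1), binCoeff α i * binCoeff β (n - i) := by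
      rw [Finset.mul_sum, Finset.mul_sum]
      have expand : ∀ i ∈ Finset.range (n + 2),
          ((n : ℝ) + 1) * (binCoeff α i * binCoeff β (n + 1 - i)) =
            (i : ℝ) * binCoeff α i * binCoeff β (n + 1 - i)
              + ((n + 1 - i : ℕ) : ℝ) * binCoeff β (n + 1 - i) * binCoeff α i := by
        intro i hi
        have hi' : i ≤ n + 1 := Nat.lt_succ_iff.mp (Finset.mem_range.mp hi)
        have : ((n + 1 - i : ℕ) : ℝ) = (n : ℝ) + 1 - i := by
          push_cast [Nat.cast_sub hi']; ring
        rw [this]; ring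
      rw [Finset.sum_congr rfl expand, Finset.sum_add_distrib]
      -- A-part
      have hA : ∑ i ∈ Finset.range (n + 2), (i : ℝ) * binCoeff α i * binCoeff β (n + 1 - i)
          = ∑ i ∈ Finset.range (n + 1), ((i : ℝ) + α) * binCoeff α i * binCoeff β (n - i) := by
        rw [Finset.sum_range_succ' (fun i => (i : ℝ) * binCoeff α i * binCoeff β (n + 1 - i)) (n+1)]
        simp only [Nat.cast_zero, zero_mul, add_zero]
        refine Finset.sum_congr rfl fun i hi => ?_
        have h1 : n + 1 - (i + 1) = n - i := by omega
        rw [h1]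
        have := hrec hα i
        push_cast
        linear_combination binCoeff β (n - i) * this
      -- B-part
      have hB : ∑ i ∈ Finset.range (n + 2), ((n + 1 - i : ℕ) : ℝ) * binCoeff β (n + 1 - i) * binCoeff α i
          = ∑ i ∈ Finset.range (n + 1), (((n - i : ℕ) : ℝ) + β) * binCoeff β (n - i) * binCoeff α i := by
        rw [Finset.sum_range_succ]
        simp only [Nat.sub_self, Nat.cast_zero, zero_mul]
        rw [add_zero]
        refine Finset.sum_congr rfl fun i hi => ?_
        have hi' : i ≤ n := Nat.lt_succ_iff.mp (Finset.mem_range.mp hi)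
        have h1 : n + 1 - i = (n - i) + 1 := by omega
        rw [h1]
        have := hrec hβ (n - i)
        push_cast
        linear_combination binCoeff α i * this
      rw [hA, hB]
      rw [← Finset.sum_add_distrib]
      refine Finset.sum_congr rfl fun i hi => ?_
      have hi' : i ≤ n := Nat.lt_succ_iff.mp (Finset.mem_range.mp hi)
      have h1 : ((n - i : ℕ) : ℝ) = (n : ℝ) - i := by
        push_cast [Nat.cast_sub hi']; ring
      rw [h1]; ring
    have hrec' := hrec hab n
    have hn1 : ((n : ℝ) + 1) ≠ 0 := by positivity
    have : ((n : ℝ) + 1) * ∑ i ∈ Finset.range (n + 2), binCoeff α i * binCoeff β (n + 1 - i)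
        = ((n : ℝ) + 1) * binCoeff (α + β) (n + 1) := by
      rw [key, ih, hrec']; ring_nf
    exact mul_left_cancel₀ hn1 this
end
lemma binCoeff_submul {β : ℝ} (hβ : 1 ≤ β) (i j : ℕ) :
    binCoeff β (i + j) ≤ binCoeff β i * binCoeff β j := by
  have := binCoeff_cross one_pos hβ i j
  simpa [binCoeff_one] using this

/-- generic Cauchy convolution -/
def cconv {R : Type*} [NonUnitalNonAssocSemiring R] (u v : ℕ → R) (n : ℕ) : R :=
  ∑ i ∈ Finset.range (n + 1), u i * v (n - i)

/-- iterated Cauchy convolution power -/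
def cpow {R : Type*} [Semiring R] (u : ℕ → R) : ℕ → ℕ → R
  | 0 => fun n => if n = 0 then 1 else 0
  | (k + 1) => cconv u (cpow u k)

lemma cpow_one {R : Type*} [Semiring R] (u : ℕ → R) : cpow u 1 = u := by
  funext n
  show cconv u (cpow u 0) n = u n
  rw [cconv]
  rw [Finset.sum_eq_single n]
  · simp [cpow]
  · intro i hi hne
    have hi' : i ≤ n := Nat.lt_succ_iff.mp (Finset.mem_range.mp hi)
    have : n - i ≠ 0 := by omega
    simp [cpow, this]
  · intro h
    exact absurd (Finset.self_mem_range_succ n) h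

lemma cpow_nonneg {u : ℕ → ℝ} (hu : ∀ m, 0 ≤ u m) (k n : ℕ) : 0 ≤ cpow u k n := by
  induction k generalizing n with
  | zero => by_cases h : n = 0 <;> simp [cpow, h]
  | succ k ih =>
    show (0:ℝ) ≤ cconv u (cpow u k) n
    exact Finset.sum_nonneg fun i _ => mul_nonneg (hu i) (ih (n - i))

lemma ratio_cpow {δ γ : ℝ} (hδ : 0 < δ) (hγ : δ ≤ γ) {u : ℕ → ℝ} (hu : ∀ m, 0 ≤ u m)
    (k n : ℕ) :
    binCoeff γ n * cpow (fun m => u m * binCoeff δ m) k n ≤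
      binCoeff δ n * cpow (fun m => u m * binCoeff γ m) k n := by
  have hγ0 : 0 < γ := lt_of_lt_of_le hδ hγ
  induction k generalizing n with
  | zero =>
    by_cases h : n = 0
    · subst h; simp [cpow, binCoeff_zero hδ, binCoeff_zero hγ0]
    · simp [cpow, h]
  | succ k ih =>
    show binCoeff γ n * ∑ i ∈ Finset.range (n+1), _ ≤ binCoeff δ n * ∑ i ∈ Finset.range (n+1), _
    rw [Finset.mul_sum, Finset.mul_sum]
    refine Finset.sum_le_sum fun i hi => ?_
    have hi' : i ≤ n := Nat.lt_succ_iff.mp (Finset.mem_range.mp hi)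
    set j := n - i with hj
    have hij : i + j = n := by omega
    have hcross := binCoeff_cross hδ hγ i j
    rw [hij] at hcross
    have hIH := ih j
    have hCPδ : 0 ≤ cpow (fun m => u m * binCoeff δ m) k j :=
      cpow_nonneg (fun m => mul_nonneg (hu m) (binCoeff_pos hδ m).le) k j
    have hCPγ : 0 ≤ cpow (fun m => u m * binCoeff γ m) k j :=
      cpow_nonneg (fun m => mul_nonneg (hu m) (binCoeff_pos hγ0 m).le) k j
    have hδj := binCoeff_pos hδ j
    have hδi := binCoeff_pos hδ i
    have hγi := binCoeff_pos hγ0 i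
    have hγj := binCoeff_pos hγ0 j
    have hδn := binCoeff_pos hδ n
    have hγn := binCoeff_pos hγ0 n
    -- goal : binCoeff γ n * (u i * binCoeff δ i * CPδ j) ≤ binCoeff δ n * (u i * binCoeff γ i * CPγ j)
    rw [← mul_le_mul_iff_of_pos_right hδj]
    calc binCoeff γ n * (u i * binCoeff δ i * cpow (fun m => u m * binCoeff δ m) k j) * binCoeff δ j
        = (u i * cpow (fun m => u m * binCoeff δ m) k j) *
            (binCoeff γ n * (binCoeff δ i * binCoeff δ j)) := by ring
      _ ≤ (u i * cpow (fun m => u m * binCoeff δ m) k j) *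
            (binCoeff δ n * (binCoeff γ i * binCoeff γ j)) := by
          exact mul_le_mul_of_nonneg_left hcross (mul_nonneg (hu i) hCPδ)
      _ = (u i * binCoeff δ n * binCoeff γ i) *
            (binCoeff γ j * cpow (fun m => u m * binCoeff δ m) k j) := by ring
      _ ≤ (u i * binCoeff δ n * binCoeff γ i) *
            (binCoeff δ j * cpow (fun m => u m * binCoeff γ m) k j) := by
          exact mul_le_mul_of_nonneg_left hIH
            (mul_nonneg (mul_nonneg (hu i) hδn.le) hγi.le)
      _ = binCoeff δ n * (u i * binCoeff γ i * cpow (fun m => u m * binCoeff γ m) k j) *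
            binCoeff δ j := by ring
lemma key_cs {β : ℝ} (hβ : 1 ≤ β) (a : ℕ → ℂ) (k : ℕ) (hk : 1 ≤ k) (n : ℕ) :
    ‖cpow a k n‖ ^ 2 * binCoeff β n ≤
      cpow (fun m => ‖a m‖ ^ 2 * binCoeff ((k : ℝ) * β) m) k n := by
  have hβ0 : 0 < β := lt_of_lt_of_le one_pos hβ
  induction k, hk using Nat.le_induction generalizing n with
  | base => simp [cpow_one]
  | succ k hk ih =>
    have hkβ1 : 1 ≤ (k : ℝ) * β := by
      have : (1:ℝ) ≤ (k:ℝ) := by exact_mod_cast hk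
      nlinarith
    have hkβ0 : 0 < (k : ℝ) * β := lt_of_lt_of_le one_pos hkβ1
    have hγ1 : 1 ≤ ((k:ℕ)+1 : ℝ) * β := by nlinarith [hkβ1, hβ0.le]
    have hγ0 : 0 < ((k:ℕ)+1 : ℝ) * β := lt_of_lt_of_le one_pos hγ1
    set γ : ℝ := ((k:ℕ)+1 : ℝ) * β with hγdef
    have hcast : ((k+1 : ℕ) : ℝ) * β = γ := by push_cast [hγdef]; ring
    rw [hcast]
    set B : ℕ → ℂ := cpow a k with hB
    set w : ℕ → ℝ := fun m => ‖a m‖ ^ 2 * binCoeff ((k : ℝ) * β) m with hw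
    set w' : ℕ → ℝ := fun m => ‖a m‖ ^ 2 * binCoeff γ m with hw'
    have hw0 : ∀ m, 0 ≤ w m := fun m =>
      mul_nonneg (by positivity) (binCoeff_pos hkβ0 m).le
    have hw'0 : ∀ m, 0 ≤ w' m := fun m =>
      mul_nonneg (by positivity) (binCoeff_pos hγ0 m).le
    set F : ℕ → ℝ := fun i => Real.sqrt (binCoeff β i * binCoeff ((k : ℝ) * β) (n - i)) with hF
    have hFpos : ∀ i, 0 < F i := fun i =>
      Real.sqrt_pos.mpr (mul_pos (binCoeff_pos hβ0 i) (binCoeff_pos hkβ0 (n - i)))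
    have hFsq : ∀ i, F i ^ 2 = binCoeff β i * binCoeff ((k : ℝ) * β) (n - i) := fun i =>
      Real.sq_sqrt (mul_pos (binCoeff_pos hβ0 i) (binCoeff_pos hkβ0 (n - i))).le
    set G : ℕ → ℝ := fun i => ‖a i‖ * ‖B (n - i)‖ / F i with hG
    have hA : ‖cpow a (k+1) n‖ ≤
        ∑ i ∈ Finset.range (n+1), ‖a i‖ * ‖B (n - i)‖ := by
      show ‖cconv a B n‖ ≤ _
      refine le_trans (norm_sum_le _ _) (le_of_eq (Finset.sum_congr rfl fun i _ => ?_))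
      exact norm_mul _ _
    have hV : ∑ i ∈ Finset.range (n+1), F i ^ 2 = binCoeff γ n := by
      have hsum := binCoeff_vandermonde hβ0 hkβ0 n
      have hadd : β + (k:ℝ) * β = γ := by rw [hγdef]; ring
      rw [hadd] at hsum
      rw [← hsum]
      exact Finset.sum_congr rfl fun i _ => hFsq i
    have hB2 : (∑ i ∈ Finset.range (n+1), ‖a i‖ * ‖B (n - i)‖) ^ 2 ≤
        binCoeff γ n * ∑ i ∈ Finset.range (n+1), G i ^ 2 := by
      have hcs := Finset.sum_mul_sq_le_sq_mul_sq (Finset.range (n+1)) F G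
      have heq : ∀ i ∈ Finset.range (n+1), F i * G i =
          ‖a i‖ * ‖B (n - i)‖ := by
        intro i _
        show F i * (‖a i‖ * ‖B (n - i)‖ / F i) = _
        rw [mul_comm, div_mul_cancel₀ _ (hFpos i).ne']
      rw [Finset.sum_congr rfl heq, hV] at hcs
      exact hcs
    have habs2 : ‖cpow a (k+1) n‖ ^ 2 * binCoeff β n ≤
        binCoeff β n * (binCoeff γ n * ∑ i ∈ Finset.range (n+1), G i ^ 2) := by
      have h1 : ‖cpow a (k+1) n‖ ^ 2 ≤
          (∑ i ∈ Finset.range (n+1), ‖a i‖ * ‖B (n - i)‖) ^ 2 :=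
        pow_le_pow_left₀ (norm_nonneg _) hA 2
      nlinarith [binCoeff_pos hβ0 n, h1, hB2]
    refine le_trans habs2 ?_
    have hterm : ∀ i ∈ Finset.range (n+1),
        binCoeff β n * (binCoeff γ n * G i ^ 2) ≤ w' i * cpow w' k (n - i) := by
      intro i hi
      have hi' : i ≤ n := Nat.lt_succ_iff.mp (Finset.mem_range.mp hi)
      set j := n - i with hj
      have hij : i + j = n := by omega
      have hGsq : G i ^ 2 = ‖a i‖ ^ 2 * ‖B j‖ ^ 2 /
          (binCoeff β i * binCoeff ((k : ℝ) * β) j) := by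
        rw [hG]
        show (‖a i‖ * ‖B j‖ / F i) ^ 2 = _
        rw [div_pow, hFsq, mul_pow]
      rw [hGsq]
      have hc1 : binCoeff β n ≤ binCoeff β i * binCoeff β j := by
        rw [← hij]; exact binCoeff_submul hβ i j
      have hc2 : binCoeff γ n ≤ binCoeff γ i * binCoeff γ j := by
        rw [← hij]; exact binCoeff_submul hγ1 i j
      have hIH := ih j
      have hr := ratio_cpow hkβ0 (by rw [hγdef]; nlinarith [hβ0.le] : (k : ℝ) * β ≤ γ)
        (fun m => (by positivity : (0:ℝ) ≤ ‖a m‖ ^ 2)) k j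
      have hCPk : 0 ≤ cpow w k j := cpow_nonneg hw0 k j
      have hCP' : 0 ≤ cpow w' k j := cpow_nonneg hw'0 k j
      have hβi := binCoeff_pos hβ0 i
      have hβj := binCoeff_pos hβ0 j
      have hβn := binCoeff_pos hβ0 n
      have hγi := binCoeff_pos hγ0 i
      have hγj := binCoeff_pos hγ0 j
      have hγn := binCoeff_pos hγ0 n
      have hkβj := binCoeff_pos hkβ0 j
      have habsa : (0:ℝ) ≤ ‖a i‖ ^ 2 := by positivity
      have habsB : (0:ℝ) ≤ ‖B j‖ ^ 2 := by positivity
      simp only [hw']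
      rw [show binCoeff β n * (binCoeff γ n *
            (‖a i‖ ^ 2 * ‖B j‖ ^ 2 /
              (binCoeff β i * binCoeff ((k:ℝ) * β) j))) =
          (binCoeff β n * binCoeff γ n) * (‖a i‖ ^ 2 * ‖B j‖ ^ 2) /
            (binCoeff β i * binCoeff ((k:ℝ) * β) j) from by ring]
      rw [div_le_iff₀ (by positivity)]
      calc (binCoeff β n * binCoeff γ n) * (‖a i‖ ^ 2 * ‖B j‖ ^ 2)
          ≤ ((binCoeff β i * binCoeff β j) * (binCoeff γ i * binCoeff γ j)) *
              (‖a i‖ ^ 2 * ‖B j‖ ^ 2) := by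
            refine mul_le_mul_of_nonneg_right ?_ (by positivity)
            exact mul_le_mul hc1 hc2 hγn.le (mul_nonneg hβi.le hβj.le)
        _ = (‖a i‖ ^ 2 * binCoeff γ i * binCoeff β i) *
              (binCoeff γ j * (‖B j‖ ^ 2 * binCoeff β j)) := by ring
        _ ≤ (‖a i‖ ^ 2 * binCoeff γ i * binCoeff β i) *
              (binCoeff γ j * cpow w k j) := by
            refine mul_le_mul_of_nonneg_left (mul_le_mul_of_nonneg_left hIH hγj.le)
              (by positivity)
        _ ≤ (‖a i‖ ^ 2 * binCoeff γ i * binCoeff β i) *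
              (binCoeff ((k : ℝ) * β) j * cpow w' k j) := by
            refine mul_le_mul_of_nonneg_left hr (by positivity)
        _ = ‖a i‖ ^ 2 * binCoeff γ i * cpow w' k j *
              (binCoeff β i * binCoeff ((k : ℝ) * β) j) := by ring
    calc binCoeff β n * (binCoeff γ n * ∑ i ∈ Finset.range (n+1), G i ^ 2)
        = ∑ i ∈ Finset.range (n+1), binCoeff β n * (binCoeff γ n * G i ^ 2) := by
          rw [← mul_assoc, Finset.mul_sum]
          exact Finset.sum_congr rfl fun i _ => by ring
      _ ≤ ∑ i ∈ Finset.range (n+1), w' i * cpow w' k (n - i) := Finset.sum_le_sum hterm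
      _ = cpow w' (k+1) n := rfl
lemma norm_eq_self_of_nonneg {u : ℕ → ℝ} (hu : ∀ n, 0 ≤ u n) : (fun n => ‖u n‖) = u :=
  funext fun n => Real.norm_of_nonneg (hu n)

lemma summable_cconv {u v : ℕ → ℝ} (hu0 : ∀ n, 0 ≤ u n) (hv0 : ∀ n, 0 ≤ v n)
    (hu : Summable u) (hv : Summable v) : Summable (cconv u v) := by
  have h := summable_norm_sum_mul_range_of_summable_norm (R := ℝ)
    (by rw [norm_eq_self_of_nonneg hu0]; exact hu)
    (by rw [norm_eq_self_of_nonneg hv0]; exact hv)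
  exact h.of_norm

lemma tsum_cconv {u v : ℕ → ℝ} (hu0 : ∀ n, 0 ≤ u n) (hv0 : ∀ n, 0 ≤ v n)
    (hu : Summable u) (hv : Summable v) : ∑' n, cconv u v n = (∑' n, u n) * (∑' n, v n) :=
  (tsum_mul_tsum_eq_tsum_sum_range_of_summable_norm (R := ℝ)
    (by rw [norm_eq_self_of_nonneg hu0]; exact hu)
    (by rw [norm_eq_self_of_nonneg hv0]; exact hv)).symm

lemma summable_cpow {u : ℕ → ℝ} (hu0 : ∀ n, 0 ≤ u n) (hu : Summable u) (k : ℕ) :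
    Summable (cpow u k) := by
  induction k with
  | zero => exact (hasSum_ite_eq 0 (1:ℝ)).summable
  | succ k ih => exact summable_cconv hu0 (cpow_nonneg hu0 k) hu ih

lemma tsum_cpow {u : ℕ → ℝ} (hu0 : ∀ n, 0 ≤ u n) (hu : Summable u) (k : ℕ) :
    ∑' n, cpow u k n = (∑' n, u n) ^ k := by
  induction k with
  | zero => exact (hasSum_ite_eq 0 (1:ℝ)).tsum_eq.trans (pow_zero _).symm
  | succ k ih =>
    show ∑' n, cconv u (cpow u k) n = _
    rw [tsum_cconv hu0 (cpow_nonneg hu0 k) hu (summable_cpow hu0 hu k), ih, pow_succ]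
    ring

lemma summable_norm_term {a : ℕ → ℂ} (hsq : Summable fun n => ‖a n‖ ^ 2)
    {z : ℂ} (hz : ‖z‖ < 1) : Summable fun n => ‖a n * z ^ n‖ := by
  have hz0 : 0 ≤ ‖z‖ := norm_nonneg z
  have hmaj : Summable (fun n => (‖a n‖ ^ 2 + ‖z‖ ^ n) / 2) := by
    refine ((hsq.add (summable_geometric_of_lt_one hz0 hz)).div_const 2)
  refine Summable.of_nonneg_of_le (fun n => norm_nonneg _) (fun n => ?_) hmaj
  rw [norm_mul, norm_pow]
  have h1 : ‖z‖ ^ n ≤ 1 := pow_le_one₀ hz0 hz.le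
  have h2 : (0:ℝ) ≤ ‖z‖ ^ n := by positivity
  have h3 : (0:ℝ) ≤ ‖a n‖ := norm_nonneg _
  show ‖a n‖ * ‖z‖ ^ n ≤ (‖a n‖ ^ 2 + ‖z‖ ^ n) / 2
  show ‖a n‖ * ‖z‖ ^ n ≤ (‖a n‖ ^ 2 + ‖z‖ ^ n) / 2
  nlinarith [sq_nonneg (‖a n‖ - ‖z‖ ^ n), mul_nonneg (mul_nonneg h3 h3) h2]

lemma cpow_series {a : ℕ → ℂ} {z : ℂ} (ha : Summable fun n => ‖a n * z ^ n‖) (k : ℕ) :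
    (Summable fun n => ‖cpow a k n * z ^ n‖) ∧
      (∑' n, a n * z ^ n) ^ k = ∑' n, cpow a k n * z ^ n := by
  induction k with
  | zero =>
    have hfun : (fun n => cpow a 0 n * z ^ n) = fun n => if n = 0 then (1:ℂ) else 0 := by
      funext n
      by_cases h : n = 0 <;> simp [cpow, h]
    constructor
    · refine ((hasSum_ite_eq 0 (1:ℝ)).summable).congr fun n => ?_
      rw [show cpow a 0 n * z ^ n = (fun m => if m = 0 then (1:ℂ) else 0) n from congrFun hfun n]
      by_cases h : n = 0 <;> simp [h]
    · rw [hfun, (hasSum_ite_eq 0 (1:ℂ)).tsum_eq, pow_zero]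
  | succ k ih =>
    obtain ⟨ihs, ihe⟩ := ih
    have hinner : ∀ n, (∑ i ∈ Finset.range (n+1), (a i * z ^ i) *
        (cpow a k (n - i) * z ^ (n - i))) = cpow a (k+1) n * z ^ n := by
      intro n
      show _ = cconv a (cpow a k) n * z ^ n
      rw [cconv, Finset.sum_mul]
      refine Finset.sum_congr rfl fun i hi => ?_
      have hi' : i ≤ n := Nat.lt_succ_iff.mp (Finset.mem_range.mp hi)
      have : z ^ i * z ^ (n - i) = z ^ n := by
        rw [← pow_add, Nat.add_sub_cancel' hi']
      rw [show (a i * z ^ i) * (cpow a k (n - i) * z ^ (n - i)) =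
        (a i * cpow a k (n - i)) * (z ^ i * z ^ (n - i)) from by ring, this]
    constructor
    · have hb := summable_norm_sum_mul_range_of_summable_norm (R := ℂ) ha ihs
      refine hb.congr fun n => ?_
      rw [hinner n]
    · calc (∑' n, a n * z ^ n) ^ (k+1)
          = (∑' n, a n * z ^ n) * (∑' n, a n * z ^ n) ^ k := by rw [pow_succ]; ring
        _ = (∑' n, a n * z ^ n) * (∑' n, cpow a k n * z ^ n) := by rw [ihe]
        _ = ∑' n, ∑ i ∈ Finset.range (n+1), (a i * z ^ i) * (cpow a k (n - i) * z ^ (n - i)) :=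
            tsum_mul_tsum_eq_tsum_sum_range_of_summable_norm ha ihs
        _ = ∑' n, cpow a (k+1) n * z ^ n := by
            exact tsum_congr fun n => hinner n

/-- Transfer lemma: if `‖g‖_{H^q} ≤ (Σ |aₙ|² c_β(n))^{1/2}` holds for all `g` with finite
right-hand side, then `‖f‖_{H^{kq}} ≤ (Σ |aₙ|² c_{kβ}(n))^{1/2}` for every positive
integer `k` (the Hardy norm bound being expressed radius by radius). -/
theorem transfer_upper (q β : ℝ) (hq : 2 ≤ q) (hβ : 1 ≤ β)
    (hyp : ∀ (a : ℕ → ℂ) (g : ℂ → ℂ),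
      (∀ z : ℂ, ‖z‖ < 1 → g z = ∑' n, a n * z ^ n) →
      (Summable fun n => ‖a n‖ ^ 2 * binCoeff β n) →
      ∀ r : ℝ, 0 < r → r < 1 →
        hardyMean q g r ≤ (∑' n, ‖a n‖ ^ 2 * binCoeff β n) ^ ((1 : ℝ) / 2))
    (k : ℕ) (hk : 1 ≤ k) :
    ∀ (a : ℕ → ℂ) (f : ℂ → ℂ),
      (∀ z : ℂ, ‖z‖ < 1 → f z = ∑' n, a n * z ^ n) →
      (Summable fun n => ‖a n‖ ^ 2 * binCoeff ((k : ℝ) * β) n) →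
      ∀ r : ℝ, 0 < r → r < 1 →
        hardyMean ((k : ℝ) * q) f r ≤
          (∑' n, ‖a n‖ ^ 2 * binCoeff ((k : ℝ) * β) n) ^ ((1 : ℝ) / 2) := by
  intro a f hrep hsumm r hr0 hr1
  have hq0 : 0 < q := lt_of_lt_of_le two_pos hq
  have hβ0 : 0 < β := lt_of_lt_of_le one_pos hβ
  have hk1 : (1:ℝ) ≤ (k:ℝ) := by exact_mod_cast hk
  have hk0 : 0 < (k:ℝ) := lt_of_lt_of_le one_pos hk1
  have hkβ1 : 1 ≤ (k:ℝ) * β := by nlinarith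
  have hkβ0 : 0 < (k:ℝ) * β := lt_of_lt_of_le one_pos hkβ1
  set w : ℕ → ℝ := fun m => ‖a m‖ ^ 2 * binCoeff ((k:ℝ) * β) m with hw
  have hw0 : ∀ m, 0 ≤ w m := fun m =>
    mul_nonneg (by positivity) (binCoeff_pos hkβ0 m).le
  have hsq : Summable fun n => ‖a n‖ ^ 2 :=
    Summable.of_nonneg_of_le (fun n => by positivity)
      (fun n => le_mul_of_one_le_right (by positivity) (one_le_binCoeff hkβ1 n)) hsumm
  set b : ℕ → ℂ := cpow a k with hb
  have hbsum_le : ∀ n, ‖b n‖ ^ 2 * binCoeff β n ≤ cpow w k n :=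
    fun n => key_cs hβ a k hk n
  have hcp_sum : Summable (cpow w k) := summable_cpow hw0 hsumm k
  have hbsum : Summable fun n => ‖b n‖ ^ 2 * binCoeff β n :=
    Summable.of_nonneg_of_le
      (fun n => mul_nonneg (by positivity) (binCoeff_pos hβ0 n).le) hbsum_le hcp_sum
  set g : ℂ → ℂ := fun z => f z ^ k with hg
  have hgrep : ∀ z : ℂ, ‖z‖ < 1 → g z = ∑' n, b n * z ^ n := by
    intro z hz
    have ha := summable_norm_term hsq hz
    have hps := (cpow_series ha k).2
    show f z ^ k = _
    rw [hrep z hz, hps]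
  have hmain := hyp b g hgrep hbsum r hr0 hr1
  set S : ℝ := ∑' n, w n with hS
  have hS0 : 0 ≤ S := tsum_nonneg hw0
  have hT0 : 0 ≤ ∑' n, ‖b n‖ ^ 2 * binCoeff β n :=
    tsum_nonneg fun n => mul_nonneg (by positivity) (binCoeff_pos hβ0 n).le
  have hT : (∑' n, ‖b n‖ ^ 2 * binCoeff β n) ≤ S ^ k := by
    rw [hS, ← tsum_cpow hw0 hsumm k]
    exact Summable.tsum_le_tsum hbsum_le hbsum hcp_sum
  -- relating the Hardy means
  have habsx : ∀ x : ℂ, ‖x ^ k‖ ^ q = ‖x‖ ^ ((k:ℝ) * q) := by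
    intro x
    rw [norm_pow, ← Real.rpow_natCast (‖x‖) k, ← Real.rpow_mul (norm_nonneg x)]
  set I : ℝ := (2 * π)⁻¹ *
      ∫ θ in (0:ℝ)..(2 * π),
        ‖f ((r : ℂ) * Complex.exp ((θ : ℂ) * Complex.I))‖ ^ ((k:ℝ) * q) with hI
  have hI0 : 0 ≤ I := by
    refine mul_nonneg (by positivity) ?_
    refine intervalIntegral.integral_nonneg (by positivity) fun x _ => by positivity
  have hgI : hardyMean q g r = I ^ ((1:ℝ) / q) := by
    rw [hardyMean, hI]
    congr 2
    refine intervalIntegral.integral_congr fun θ _ => ?_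
    show ‖f ((r : ℂ) * Complex.exp ((θ : ℂ) * Complex.I)) ^ k‖ ^ q = _
    exact habsx _
  have hfI : hardyMean ((k:ℝ) * q) f r = I ^ ((1:ℝ) / ((k:ℝ) * q)) := by
    rw [hardyMean, hI]
  rw [hfI]
  have hsplit : ((1:ℝ) / ((k:ℝ) * q)) = (1 / q) * (1 / (k:ℝ)) := by
    field_simp
  rw [hsplit, Real.rpow_mul hI0]
  have hstep1 : I ^ ((1:ℝ) / q) ≤ (S ^ k) ^ ((1:ℝ) / 2) := by
    rw [← hgI] at *
    calc hardyMean q g r ≤ (∑' n, ‖b n‖ ^ 2 * binCoeff β n) ^ ((1:ℝ)/2) := hmain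
      _ ≤ (S ^ k) ^ ((1:ℝ)/2) := Real.rpow_le_rpow hT0 hT (by norm_num)
  have hfinal : ((S ^ k) ^ ((1:ℝ) / 2)) ^ ((1:ℝ) / (k:ℝ)) = S ^ ((1:ℝ) / 2) := by
    rw [← Real.rpow_natCast S k, ← Real.rpow_mul hS0, ← Real.rpow_mul hS0]
    congr 1
    field_simp
  calc (I ^ ((1:ℝ) / q)) ^ ((1:ℝ) / (k:ℝ))
      ≤ ((S ^ k) ^ ((1:ℝ) / 2)) ^ ((1:ℝ) / (k:ℝ)) := by
        refine Real.rpow_le_rpow (Real.rpow_nonneg hI0 _) hstep1 (by positivity)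
    _ = S ^ ((1:ℝ) / 2) := hfinal
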